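/- Every Krasnoselskiĭ contracting self-map of a metric space is Matkowski contracting: if f : X → X satisfies sup_{a ≤ t ≤ b} ω_f(t)/t < 1 for all 0 < a < b < ∞, then lim_{n→∞} ω_f^n(t) = 0 for all t > 0. -/

import Mathlib

open Filter Topology ENNReal

/-- The oscillation of a self-map `f` of a metric space. -/
noncomputable def osc {X : Type*} [MetricSpace X] (f : X → X) (t : ℝ≥0∞) : ℝ≥0∞ :=
  ⨆ (x : X) (y : X) (_ : edist x y ≤ t), edist (f x) (f y)

lemma osc_zero {X : Type*} [MetricSpace X] (f : X → X) : osc f 0 = 0 := by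
  simp only [osc, nonpos_iff_eq_zero, edist_eq_zero]
  refine le_antisymm ?_ (zero_le)
  refine iSup_le fun x => iSup_le fun y => iSup_le fun h => ?_
  subst h; simp

/-- Every Krasnoselskiĭ contracting self-map of a metric space is Matkowski contracting. -/
theorem krasnoselskii_implies_matkowski {X : Type*} [MetricSpace X] (f : X → X)
    (hK : ∀ a b : ℝ≥0∞, 0 < a → a < b → b ≠ ⊤ → (⨆ t ∈ Set.Icc a b, osc f t / t) < 1) :
    ∀ t : ℝ≥0∞, 0 < t → t ≠ ⊤ → Tendsto (fun n => (osc f)^[n] t) atTop (𝓝 0) := by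
  intro t ht ht'
  set g := osc f with hg
  -- strict contraction pointwise
  have hlt : ∀ s : ℝ≥0∞, 0 < s → s ≠ ⊤ → g s < s := by
    intro s hs hs'
    have hsb : s < s + 1 := ENNReal.lt_add_right hs' one_ne_zero
    have h1 := hK s (s + 1) hs hsb (by simp [hs'])
    have h2 : g s / s ≤ ⨆ u ∈ Set.Icc s (s + 1), osc f u / u :=
      le_iSup₂ (f := fun u _ => osc f u / u) s ⟨le_refl s, hsb.le⟩
    have := lt_of_le_of_lt h2 h1
    rw [ENNReal.div_lt_iff (Or.inl hs.ne') (Or.inl hs'), one_mul] at this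
    exact this
  have hle : ∀ s : ℝ≥0∞, s ≠ ⊤ → g s ≤ s := by
    intro s hs'
    rcases eq_or_ne s 0 with rfl | h0
    · exact le_of_eq (osc_zero f)
    · exact (hlt s (pos_iff_ne_zero.mpr h0) hs').le
  -- boundedness of iterates
  have hbd : ∀ n, g^[n] t ≤ t := by
    intro n
    induction n with
    | zero => simp
    | succ n ih =>
      rw [Function.iterate_succ_apply']
      exact le_trans (hle _ (lt_of_le_of_lt ih (lt_top_iff_ne_top.mpr ht')).ne) ih
  have hanti : Antitone fun n => g^[n] t := by
    refine antitone_nat_of_succ_le fun n => ?_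
    rw [Function.iterate_succ_apply']
    exact hle _ (lt_of_le_of_lt (hbd n) (lt_top_iff_ne_top.mpr ht')).ne
  have htend : Tendsto (fun n => g^[n] t) atTop (𝓝 (⨅ n, g^[n] t)) :=
    tendsto_atTop_iInf hanti
  set L := ⨅ n, g^[n] t with hL
  rcases eq_or_ne L 0 with h0 | h0
  · rwa [h0] at htend
  exfalso
  have hLpos : 0 < L := pos_iff_ne_zero.mpr h0
  have hLt : L < t := lt_of_le_of_lt (iInf_le _ 1) (by simpa using hlt t ht ht')
  set c := ⨆ u ∈ Set.Icc L t, osc f u / u with hc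
  have hc1 : c < 1 := hK L t hLpos hLt ht'
  have hstep : ∀ s, L ≤ s → s ≤ t → g s ≤ c * s := by
    intro s hs1 hs2
    have hs0 : s ≠ 0 := (lt_of_lt_of_le hLpos hs1).ne'
    have hst : s ≠ ⊤ := (lt_of_le_of_lt hs2 (lt_top_iff_ne_top.mpr ht')).ne
    have h2 : g s / s ≤ c := le_iSup₂ (f := fun u _ => osc f u / u) s ⟨hs1, hs2⟩
    rwa [ENNReal.div_le_iff hs0 hst] at h2
  have hgeo : ∀ n, g^[n] t ≤ c ^ n * t := by
    intro n
    induction n with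
    | zero => simp
    | succ n ih =>
      rw [Function.iterate_succ_apply']
      calc g (g^[n] t) ≤ c * g^[n] t := hstep _ (iInf_le _ n) (hbd n)
        _ ≤ c * (c ^ n * t) := mul_le_mul_right ih c
        _ = c ^ (n + 1) * t := by ring
  have hpow : Tendsto (fun n => c ^ n * t) atTop (𝓝 0) := by
    have := ENNReal.Tendsto.mul_const
      (ENNReal.tendsto_pow_atTop_nhds_zero_of_lt_one hc1) (Or.inr ht')
    simpa using this
  obtain ⟨n, hn⟩ := (hpow.eventually (eventually_lt_nhds hLpos)).exists
  exact absurd (lt_of_le_of_lt (le_trans (iInf_le _ n) (hgeo n)) hn) (lt_irrefl L)
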